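/- Let d ≥ 1, let a ∈ ℝ^d be a vector all of whose coordinates are non-zero, and let b ∈ ℝ. Then the d-dimensional Lebesgue measure of the set {x ∈ [0,1]^d : a·x ≤ b} equals the sum, over all vertices v of [0,1]^d (i.e., all v ∈ {0,1}^d) satisfying a·v ≤ b, of (−1)^{σ(v)} (b − a·v)^d / (d! · π(a)). -/

import Mathlib

open MeasureTheory Real Finset


noncomputable def gg (k : ℕ) (t : ℝ) : ℝ := if 0 ≤ t then t ^ k / k.factorial else 0

lemma gg_eq_max (k : ℕ) (hk : 1 ≤ k) (t : ℝ) : gg k t = max t 0 ^ k / k.factorial := by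
  unfold gg
  rcases le_or_gt 0 t with h | h
  · rw [if_pos h, max_eq_left h]
  · rw [if_neg (not_le.mpr h), max_eq_right h.le, zero_pow (by omega)]
    simp

lemma gg_cont (k : ℕ) (hk : 1 ≤ k) : Continuous (gg k) := by
  have : gg k = fun t : ℝ => max t 0 ^ k / (k.factorial : ℝ) := funext (gg_eq_max k hk)
  rw [this]
  fun_prop

lemma gg_hasDerivAt (k : ℕ) (hk : 1 ≤ k) (t : ℝ) : HasDerivAt (gg (k+1)) (gg k t) t := by
  rcases lt_trichotomy t 0 with h | h | h
  · have h2 : gg k t = 0 := by unfold gg; rw [if_neg (not_le.mpr h)]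
    rw [h2]
    refine (hasDerivAt_const t (0:ℝ)).congr_of_eventuallyEq ?_
    filter_upwards [Iio_mem_nhds h] with s hs
    unfold gg; rw [if_neg (not_le.mpr hs)]
  · subst h
    have h2 : gg k 0 = 0 := by unfold gg; simp [zero_pow (by omega : k ≠ 0)]
    rw [h2, hasDerivAt_iff_tendsto_slope]
    have hb : Filter.Tendsto (fun s : ℝ => |s| ^ k / (k+1).factorial) (nhdsWithin 0 {(0:ℝ)}ᶜ) (nhds 0) := by
      have hc : Continuous fun s : ℝ => |s| ^ k / ((k+1).factorial : ℝ) := by fun_prop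
      have := hc.tendsto 0
      simp only [abs_zero, zero_pow (by omega : k ≠ 0), zero_div] at this
      exact this.mono_left nhdsWithin_le_nhds
    refine squeeze_zero_norm' ?_ hb
    filter_upwards [self_mem_nhdsWithin] with s hs
    have hs0 : s ≠ 0 := hs
    have hgg0 : gg (k+1) 0 = 0 := by unfold gg; simp
    have hslope : slope (gg (k+1)) 0 s = gg (k+1) s / s := by
      rw [slope_def_field, hgg0]
      ring
    rw [hslope, Real.norm_eq_abs, abs_div]
    have hnum : |gg (k+1) s| ≤ |s| ^ (k+1) / (k+1).factorial := by
      unfold gg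
      split_ifs with h
      · rw [abs_of_nonneg (by positivity)]
        gcongr
        exact le_abs_self s
      · simpa using by positivity
    have hsa : (0:ℝ) < |s| := abs_pos.mpr hs0
    calc |gg (k+1) s| / |s| ≤ (|s| ^ (k+1) / (k+1).factorial) / |s| := by gcongr
      _ = |s| ^ k / (k+1).factorial := by
          rw [pow_succ]
          field_simp
  · have h1 : HasDerivAt (fun s : ℝ => s ^ (k+1) / (k+1).factorial) (t ^ k / k.factorial) t := by
      have := (hasDerivAt_pow (k+1) t).div_const ((k+1).factorial : ℝ)
      refine this.congr_deriv ?_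
      rw [Nat.add_sub_cancel, Nat.factorial_succ]
      push_cast
      rw [mul_div_mul_left _ _ (by positivity : (k:ℝ) + 1 ≠ 0)]
    have h2 : gg k t = t ^ k / k.factorial := by unfold gg; rw [if_pos h.le]
    rw [h2]
    refine h1.congr_of_eventuallyEq ?_
    filter_upwards [Ioi_mem_nhds h] with s hs
    unfold gg; rw [if_pos hs.le]

lemma gg_chain (k : ℕ) (hk : 1 ≤ k) (a c : ℝ) (ha : a ≠ 0) (t : ℝ) :
    HasDerivAt (fun t => -gg (k+1) (c - a*t) / a) (gg k (c - a*t)) t := by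
  have hu : HasDerivAt (fun t : ℝ => c - a * t) (0 - a) t :=
    (hasDerivAt_const t c).sub (by simpa using (hasDerivAt_id t).const_mul a)
  have h2 := (((gg_hasDerivAt k hk (c - a * t)).comp t hu).div_const a).neg
  refine (h2.congr_deriv ?_).congr_of_eventuallyEq (Filter.Eventually.of_forall fun s => ?_)
  · rw [zero_sub, mul_neg, neg_div, neg_neg, mul_div_assoc, div_self ha, mul_one]
  · simp [Function.comp]
    ring

lemma integral_gg (k : ℕ) (hk : 1 ≤ k) (a c : ℝ) (ha : a ≠ 0) :
    ∫ t in Set.Icc (0:ℝ) 1, gg k (c - a * t) = (gg (k+1) c - gg (k+1) (c - a)) / a := by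
  have hint : IntervalIntegrable (fun t => gg k (c - a * t)) volume 0 1 :=
    Continuous.intervalIntegrable ((gg_cont k hk).comp (by fun_prop)) 0 1
  rw [MeasureTheory.integral_Icc_eq_integral_Ioc,
    ← intervalIntegral.integral_of_le (by norm_num : (0:ℝ) ≤ 1)]
  rw [intervalIntegral.integral_eq_sub_of_hasDerivAt
    (fun t _ => gg_chain k hk a c ha t) hint]
  simp only [mul_one, mul_zero, sub_zero]
  ring

lemma gg1_nonneg {u : ℝ} (h : 0 ≤ u) : gg 1 u = u := by
  unfold gg; rw [if_pos h]; simp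

lemma gg1_nonpos {u : ℝ} (h : u ≤ 0) : gg 1 u = 0 := by
  unfold gg
  split_ifs with h2
  · have : u = 0 := le_antisymm h h2
    simp [this]
  · rfl

lemma integral_gg_zero (a c : ℝ) (ha : a ≠ 0) :
    ∫ t in Set.Icc (0:ℝ) 1, gg 0 (c - a * t) = (gg 1 c - gg 1 (c - a)) / a := by
  have hset : ∀ t : ℝ, gg 0 (c - a * t) =
      Set.indicator {t : ℝ | 0 ≤ c - a * t} (fun _ => (1:ℝ)) t := by
    intro t
    unfold gg
    simp [Set.indicator_apply]
  simp_rw [hset]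
  have hms : MeasurableSet {t : ℝ | 0 ≤ c - a * t} :=
    measurableSet_le measurable_const (by fun_prop)
  rw [MeasureTheory.integral_indicator hms]
  rw [Measure.restrict_restrict hms, MeasureTheory.setIntegral_const]
  simp only [smul_eq_mul, mul_one]
  rcases lt_or_gt_of_ne ha with hneg | hpos
  · have hs : {t : ℝ | 0 ≤ c - a * t} ∩ Set.Icc 0 1 = Set.Icc (max (c/a) 0) 1 := by
      ext t
      simp only [Set.mem_inter_iff, Set.mem_setOf_eq, Set.mem_Icc, sub_nonneg, max_le_iff]
      rw [div_le_iff_of_neg hneg]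
      constructor
      · rintro ⟨h1, h2, h3⟩; exact ⟨⟨by nlinarith, h2⟩, h3⟩
      · rintro ⟨⟨h1, h2⟩, h3⟩; exact ⟨by nlinarith, h2, h3⟩
    rw [hs, Real.volume_real_Icc]
    rcases le_total 0 c with hc | hc
    · have hm : c / a ≤ 0 := div_nonpos_of_nonneg_of_nonpos hc hneg.le
      rw [max_eq_right hm, gg1_nonneg hc, gg1_nonneg (by linarith : (0:ℝ) ≤ c - a)]
      rw [max_eq_left (by norm_num : (0:ℝ) ≤ 1 - 0)]
      field_simp
      ring
    · rcases le_total (c - a) 0 with hca | hca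
      · have hm : 1 ≤ c / a := by rw [le_div_iff_of_neg hneg]; linarith
        rw [max_eq_left (by linarith : (0:ℝ) ≤ c/a), gg1_nonpos hc, gg1_nonpos hca]
        rw [max_eq_right (by linarith : 1 - c/a ≤ 0)]
        simp
      · have hm0 : 0 ≤ c / a := div_nonneg_of_nonpos hc hneg.le
        have hm1 : c / a ≤ 1 := by rw [div_le_one_of_neg hneg]; linarith
        rw [max_eq_left hm0, gg1_nonpos hc, gg1_nonneg hca]
        rw [max_eq_left (by linarith : (0:ℝ) ≤ 1 - c/a)]
        field_simp
        ring
  · have hs : {t : ℝ | 0 ≤ c - a * t} ∩ Set.Icc 0 1 = Set.Icc 0 (min (c/a) 1) := by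
      ext t
      simp only [Set.mem_inter_iff, Set.mem_setOf_eq, Set.mem_Icc, sub_nonneg, le_min_iff]
      rw [mul_comm, ← le_div_iff₀ hpos]
      tauto
    rw [hs, Real.volume_real_Icc]
    rcases le_total c 0 with hc | hc
    · have hm : c / a ≤ 0 := div_nonpos_of_nonpos_of_nonneg hc hpos.le
      rw [min_eq_left (by linarith : c/a ≤ 1), gg1_nonpos hc,
        gg1_nonpos (by linarith : c - a ≤ 0)]
      rw [max_eq_right (by linarith : c/a - 0 ≤ 0)]
      simp
    · rcases le_total c a with hca | hca
      · have hm0 : 0 ≤ c / a := div_nonneg hc hpos.le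
        have hm1 : c / a ≤ 1 := by rw [div_le_one hpos]; linarith
        rw [min_eq_left hm1, gg1_nonneg hc, gg1_nonpos (by linarith : c - a ≤ 0)]
        rw [max_eq_left (by linarith : (0:ℝ) ≤ c/a - 0)]
        ring
      · have hm : 1 ≤ c / a := by rw [le_div_iff₀ hpos]; linarith
        rw [min_eq_right hm, gg1_nonneg hc, gg1_nonneg (by linarith : (0:ℝ) ≤ c - a)]
        rw [max_eq_left (by norm_num : (0:ℝ) ≤ 1 - 0)]
        field_simp
        ring

noncomputable def nu : Measure ℝ := volume.restrict (Set.Icc 0 1)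

instance : IsProbabilityMeasure nu :=
  ⟨by simp [nu, Real.volume_Icc]⟩

lemma pi_nu_eq (n : ℕ) :
    ((Measure.pi fun _ : Fin n => (volume : Measure ℝ)).restrict
      (Set.univ.pi fun _ => Set.Icc 0 1)) = Measure.pi fun _ : Fin n => nu := by
  refine (Measure.pi_eq (μ := fun _ : Fin n => nu) fun s hs => ?_).symm
  rw [Measure.restrict_apply (MeasurableSet.univ_pi hs), ← Set.pi_inter_distrib,
    Measure.pi_pi]
  simp only [nu, Measure.restrict_apply (hs _)]

lemma integrable_cont (n : ℕ) {f : (Fin n → ℝ) → ℝ} (hf : Continuous f) :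
    Integrable f (Measure.pi fun _ : Fin n => nu) := by
  rw [← pi_nu_eq]
  exact ContinuousOn.integrableOn_compact
    (isCompact_univ_pi fun _ => isCompact_Icc) hf.continuousOn

lemma integrable_nu {f : ℝ → ℝ} (hf : Continuous f) : Integrable f nu :=
  ContinuousOn.integrableOn_compact isCompact_Icc hf.continuousOn

lemma key : ∀ (n : ℕ) (k : ℕ), 1 ≤ k → ∀ (a : Fin n → ℝ), (∀ i, a i ≠ 0) → ∀ b : ℝ,
    ∫ x, gg k (b - ∑ i, a i * x i) ∂(Measure.pi fun _ : Fin n => nu) =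
    ∑ ε : Fin n → Bool, (∏ i, if ε i then (-1:ℝ) else 1) *
      gg (n + k) (b - ∑ i, if ε i then a i else 0) / ∏ i, a i := by
  intro n
  induction n with
  | zero =>
    intro k hk a ha b
    rw [Measure.pi_of_empty, integral_dirac]
    simp
  | succ n ih =>
    intro k hk a ha b
    -- move to the product measure
    have hmp := (measurePreserving_piFinSuccAbove (fun _ : Fin (n+1) => nu) 0).symm
    have hInt : Integrable (fun x : Fin (n+1) → ℝ => gg k (b - ∑ i, a i * x i))
        (Measure.pi fun _ : Fin (n+1) => nu) :=
      integrable_cont (n+1) ((gg_cont k hk).comp (by fun_prop))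
    rw [← hmp.integral_comp (MeasurableEquiv.measurableEmbedding _)]
    have hInt2 : Integrable
        (fun p : ℝ × (Fin n → ℝ) => gg k (b - ∑ i, a i *
          ((MeasurableEquiv.piFinSuccAbove (fun _ : Fin (n+1) => ℝ) 0).symm p) i))
        (nu.prod (Measure.pi fun _ : Fin n => nu)) :=
      (hmp.integrable_comp_emb (MeasurableEquiv.measurableEmbedding _)).mpr hInt
    rw [MeasureTheory.integral_prod _ hInt2]
    -- rewrite the integrand using Fin.cons
    have hcons : ∀ (t : ℝ) (y : Fin n → ℝ),
        (∑ i, a i * ((MeasurableEquiv.piFinSuccAbove (fun _ : Fin (n+1) => ℝ) 0).symm (t, y)) i)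
          = a 0 * t + ∑ i, a i.succ * y i := by
      intro t y
      have : ((MeasurableEquiv.piFinSuccAbove (fun _ : Fin (n+1) => ℝ) 0).symm (t, y))
          = Fin.cons t y := by
        ext j
        simp [MeasurableEquiv.piFinSuccAbove, Fin.insertNth_zero']
      rw [this, Fin.sum_univ_succ]
      simp
    simp_rw [hcons]
    -- inner integral via ih
    have hinner : ∀ t : ℝ,
        (∫ y, gg k (b - (a 0 * t + ∑ i, a i.succ * y i)) ∂(Measure.pi fun _ : Fin n => nu))
        = ∑ ε : Fin n → Bool, (∏ i, if ε i then (-1:ℝ) else 1) *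
            gg (n + k) ((b - a 0 * t) - ∑ i : Fin n, if ε i then a i.succ else 0) / ∏ i : Fin n, a i.succ := by
      intro t
      rw [← ih k hk (fun i => a i.succ) (fun i => ha i.succ) (b - a 0 * t)]
      congr 1
      funext y
      ring_nf
    simp_rw [hinner]
    -- swap integral and sum
    rw [MeasureTheory.integral_finset_sum]
    swap
    · intro ε _
      apply Integrable.div_const
      apply Integrable.const_mul
      exact integrable_nu ((gg_cont (n+k) (by omega)).comp (by fun_prop))
    -- compute each 1-d integral
    have hterm : ∀ ε : Fin n → Bool,
        (∫ t, (∏ i, if ε i then (-1:ℝ) else 1) *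
          gg (n + k) ((b - a 0 * t) - ∑ i : Fin n, if ε i then a i.succ else 0) / ∏ i : Fin n, a i.succ ∂nu)
        = ((∏ i, if ε i then (-1:ℝ) else 1) / (∏ i : Fin n, a i.succ)) *
            ((gg (n+k+1) (b - ∑ i : Fin n, if ε i then a i.succ else 0)
              - gg (n+k+1) ((b - ∑ i : Fin n, if ε i then a i.succ else 0) - a 0)) / a 0) := by
      intro ε
      have harr : ∀ t : ℝ,
          (∏ i, if ε i then (-1:ℝ) else 1) *
            gg (n + k) ((b - a 0 * t) - ∑ i : Fin n, if ε i then a i.succ else 0) /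
              ∏ i : Fin n, a i.succ
          = ((∏ i, if ε i then (-1:ℝ) else 1) / ∏ i : Fin n, a i.succ) *
            gg (n + k) ((b - ∑ i : Fin n, if ε i then a i.succ else 0) - a 0 * t) := by
        intro t
        rw [show (b - a 0 * t) - (∑ i : Fin n, if ε i then a i.succ else 0)
          = (b - ∑ i : Fin n, if ε i then a i.succ else 0) - a 0 * t from by ring]
        ring
      simp_rw [harr]
      rw [MeasureTheory.integral_const_mul]
      congr 1
      show ∫ t in Set.Icc (0:ℝ) 1,
        gg (n + k) ((b - ∑ i : Fin n, if ε i then a i.succ else 0) - a 0 * t) = _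
      rw [integral_gg (n+k) (by omega) (a 0) _ (ha 0)]
    rw [Finset.sum_congr rfl fun ε _ => hterm ε]
    -- reorganize the sum on the right-hand side
    rw [show ∀ (f : (Fin (n+1) → Bool) → ℝ), (∑ ε : Fin (n+1) → Bool, f ε)
        = ∑ p : Bool × (Fin n → Bool), f ((Fin.consEquiv fun _ => Bool) p) from
      fun f => (Equiv.sum_comp (Fin.consEquiv fun _ => Bool) f).symm]
    rw [Fintype.sum_prod_type]
    rw [Fintype.sum_bool]
    rw [← Finset.sum_add_distrib]
    refine Finset.sum_congr rfl fun ε _ => ?_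
    have hc1 : ∀ c : Bool, ∀ i : Fin n, ((Fin.consEquiv fun _ : Fin (n+1) => Bool) (c, ε)) i.succ = ε i := by
      intro c i; simp [Fin.consEquiv]
    have hc0 : ∀ c : Bool, ((Fin.consEquiv fun _ : Fin (n+1) => Bool) (c, ε)) 0 = c := by
      intro c; simp [Fin.consEquiv]
    have hprodT : (∏ i : Fin (n+1),
        if ((Fin.consEquiv fun _ : Fin (n+1) => Bool) (true, ε)) i then (-1:ℝ) else 1)
        = -(∏ i : Fin n, if ε i then (-1:ℝ) else 1) := by
      rw [Fin.prod_univ_succ]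
      simp [hc0 true, hc1 true]
    have hprodF : (∏ i : Fin (n+1),
        if ((Fin.consEquiv fun _ : Fin (n+1) => Bool) (false, ε)) i then (-1:ℝ) else 1)
        = (∏ i : Fin n, if ε i then (-1:ℝ) else 1) := by
      rw [Fin.prod_univ_succ]
      simp [hc0 false, hc1 false]
    have hsumT : (∑ i : Fin (n+1),
        if ((Fin.consEquiv fun _ : Fin (n+1) => Bool) (true, ε)) i then a i else 0)
        = a 0 + ∑ i : Fin n, if ε i then a i.succ else 0 := by
      rw [Fin.sum_univ_succ]
      simp [hc0 true, hc1 true]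
    have hsumF : (∑ i : Fin (n+1),
        if ((Fin.consEquiv fun _ : Fin (n+1) => Bool) (false, ε)) i then a i else 0)
        = ∑ i : Fin n, if ε i then a i.succ else 0 := by
      rw [Fin.sum_univ_succ]
      simp [hc0 false, hc1 false]
    have hpa : (∏ i : Fin (n+1), a i) = a 0 * ∏ i : Fin n, a i.succ :=
      Fin.prod_univ_succ a
    rw [hprodT, hprodF, hsumT, hsumF, hpa]
    rw [sub_add_eq_sub_sub, sub_right_comm]
    rw [show n + 1 + k = n + k + 1 from by omega]
    have h0 : a 0 ≠ 0 := ha 0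
    have hP : (∏ i : Fin n, a i.succ) ≠ 0 :=
      Finset.prod_ne_zero_iff.mpr fun i _ => ha i.succ
    field_simp
    ring

lemma gg0_meas : Measurable (gg 0) := by
  unfold gg
  exact Measurable.ite (measurableSet_le measurable_const measurable_id)
    (by fun_prop) (by fun_prop)

lemma gg0_bound (t : ℝ) : ‖gg 0 t‖ ≤ 1 := by
  unfold gg
  split_ifs with h <;> simp

lemma main_integral (n : ℕ) (a : Fin (n+1) → ℝ) (ha : ∀ i, a i ≠ 0) (b : ℝ) :
    ∫ x, gg 0 (b - ∑ i, a i * x i) ∂(Measure.pi fun _ : Fin (n+1) => nu)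
    = ∑ ε : Fin (n+1) → Bool, (∏ i, if ε i then (-1:ℝ) else 1) *
        gg (n+1) (b - ∑ i, if ε i then a i else 0) / ∏ i, a i := by
  have hmp := (measurePreserving_piFinSuccAbove (fun _ : Fin (n+1) => nu) 0).symm
  have hmeas : Measurable (fun x : Fin (n+1) → ℝ => gg 0 (b - ∑ i, a i * x i)) :=
    gg0_meas.comp (by fun_prop)
  have hInt : Integrable (fun x : Fin (n+1) → ℝ => gg 0 (b - ∑ i, a i * x i))
      (Measure.pi fun _ : Fin (n+1) => nu) :=
    Integrable.mono' (integrable_const 1) hmeas.aestronglyMeasurable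
      (Filter.Eventually.of_forall fun x => gg0_bound _)
  rw [← hmp.integral_comp (MeasurableEquiv.measurableEmbedding _)]
  have hInt2 : Integrable
      (fun p : ℝ × (Fin n → ℝ) => gg 0 (b - ∑ i, a i *
        ((MeasurableEquiv.piFinSuccAbove (fun _ : Fin (n+1) => ℝ) 0).symm p) i))
      (nu.prod (Measure.pi fun _ : Fin n => nu)) :=
    (hmp.integrable_comp_emb (MeasurableEquiv.measurableEmbedding _)).mpr hInt
  rw [MeasureTheory.integral_prod_symm _ hInt2]
  have hcons : ∀ (t : ℝ) (y : Fin n → ℝ),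
      (∑ i, a i * ((MeasurableEquiv.piFinSuccAbove (fun _ : Fin (n+1) => ℝ) 0).symm (t, y)) i)
        = a 0 * t + ∑ i : Fin n, a i.succ * y i := by
    intro t y
    have : ((MeasurableEquiv.piFinSuccAbove (fun _ : Fin (n+1) => ℝ) 0).symm (t, y))
        = Fin.cons t y := by
      ext j
      simp [MeasurableEquiv.piFinSuccAbove, Fin.insertNth_zero']
    rw [this, Fin.sum_univ_succ]
    simp
  simp_rw [hcons]
  have hinner : ∀ y : Fin n → ℝ,
      (∫ t, gg 0 (b - (a 0 * t + ∑ i : Fin n, a i.succ * y i)) ∂nu)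
      = (gg 1 (b - ∑ i : Fin n, a i.succ * y i)
          - gg 1 ((b - a 0) - ∑ i : Fin n, a i.succ * y i)) / a 0 := by
    intro y
    have harg : ∀ t : ℝ, b - (a 0 * t + ∑ i : Fin n, a i.succ * y i)
        = (b - ∑ i : Fin n, a i.succ * y i) - a 0 * t := by intro t; ring
    simp_rw [harg]
    show ∫ t in Set.Icc (0:ℝ) 1, gg 0 ((b - ∑ i : Fin n, a i.succ * y i) - a 0 * t) = _
    rw [integral_gg_zero (a 0) _ (ha 0)]
    rw [show (b - ∑ i : Fin n, a i.succ * y i) - a 0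
      = (b - a 0) - ∑ i : Fin n, a i.succ * y i from by ring]
  simp_rw [hinner]
  rw [MeasureTheory.integral_div]
  have hI1 : Integrable (fun y : Fin n → ℝ => gg 1 (b - ∑ i : Fin n, a i.succ * y i))
      (Measure.pi fun _ : Fin n => nu) :=
    integrable_cont n ((gg_cont 1 le_rfl).comp (by fun_prop))
  have hI2 : Integrable (fun y : Fin n → ℝ => gg 1 ((b - a 0) - ∑ i : Fin n, a i.succ * y i))
      (Measure.pi fun _ : Fin n => nu) :=
    integrable_cont n ((gg_cont 1 le_rfl).comp (by fun_prop))
  rw [MeasureTheory.integral_sub hI1 hI2]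
  rw [key n 1 le_rfl (fun i => a i.succ) (fun i => ha i.succ) b,
    key n 1 le_rfl (fun i => a i.succ) (fun i => ha i.succ) (b - a 0)]
  -- reorganize the right-hand side sum
  rw [show ∀ (f : (Fin (n+1) → Bool) → ℝ), (∑ ε : Fin (n+1) → Bool, f ε)
      = ∑ p : Bool × (Fin n → Bool), f ((Fin.consEquiv fun _ => Bool) p) from
    fun f => (Equiv.sum_comp (Fin.consEquiv fun _ => Bool) f).symm]
  rw [Fintype.sum_prod_type, Fintype.sum_bool, ← Finset.sum_add_distrib,
    ← Finset.sum_sub_distrib, Finset.sum_div]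
  refine Finset.sum_congr rfl fun ε _ => ?_
  have hc1 : ∀ c : Bool, ∀ i : Fin n,
      ((Fin.consEquiv fun _ : Fin (n+1) => Bool) (c, ε)) i.succ = ε i := by
    intro c i; simp [Fin.consEquiv]
  have hc0 : ∀ c : Bool, ((Fin.consEquiv fun _ : Fin (n+1) => Bool) (c, ε)) 0 = c := by
    intro c; simp [Fin.consEquiv]
  have hprodT : (∏ i : Fin (n+1),
      if ((Fin.consEquiv fun _ : Fin (n+1) => Bool) (true, ε)) i then (-1:ℝ) else 1)
      = -(∏ i : Fin n, if ε i then (-1:ℝ) else 1) := by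
    rw [Fin.prod_univ_succ]
    simp [hc0 true, hc1 true]
  have hprodF : (∏ i : Fin (n+1),
      if ((Fin.consEquiv fun _ : Fin (n+1) => Bool) (false, ε)) i then (-1:ℝ) else 1)
      = (∏ i : Fin n, if ε i then (-1:ℝ) else 1) := by
    rw [Fin.prod_univ_succ]
    simp [hc0 false, hc1 false]
  have hsumT : (∑ i : Fin (n+1),
      if ((Fin.consEquiv fun _ : Fin (n+1) => Bool) (true, ε)) i then a i else 0)
      = a 0 + ∑ i : Fin n, if ε i then a i.succ else 0 := by
    rw [Fin.sum_univ_succ]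
    simp [hc0 true, hc1 true]
  have hsumF : (∑ i : Fin (n+1),
      if ((Fin.consEquiv fun _ : Fin (n+1) => Bool) (false, ε)) i then a i else 0)
      = ∑ i : Fin n, if ε i then a i.succ else 0 := by
    rw [Fin.sum_univ_succ]
    simp [hc0 false, hc1 false]
  have hpa : (∏ i : Fin (n+1), a i) = a 0 * ∏ i : Fin n, a i.succ :=
    Fin.prod_univ_succ a
  rw [hprodT, hprodF, hsumT, hsumF, hpa]
  rw [sub_add_eq_sub_sub, show b - a 0 - (∑ i : Fin n, if ε i then a i.succ else 0)
    = b - (∑ i : Fin n, if ε i then a i.succ else 0) - a 0 from by ring]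
  have h0 : a 0 ≠ 0 := ha 0
  have hP : (∏ i : Fin n, a i.succ) ≠ 0 :=
    Finset.prod_ne_zero_iff.mpr fun i _ => ha i.succ
  field_simp
  ring

/-- **Barrow–Smith formula**. For `d ≥ 1` and `a` with all coordinates non-zero, the
`d`-dimensional Lebesgue measure of `{x ∈ [0,1]^d : a·x ≤ b}` is the sum, over the
vertices `v` of `[0,1]^d` with `a·v ≤ b`, of `(-1)^{σ(v)} (b - a·v)^d / (d! π(a))`.
Vertices are encoded by `ε : Fin d → Bool`, with `vᵢ = 1` iff `ε i = true`. -/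
theorem stmt_2 (d : ℕ) (hd : 1 ≤ d) (a : EuclideanSpace ℝ (Fin d))
    (ha : ∀ i, a i ≠ 0) (b : ℝ) :
    volume {x : EuclideanSpace ℝ (Fin d) |
        (∀ i, x i ∈ Set.Icc (0 : ℝ) 1) ∧ ∑ i, a i * x i ≤ b} =
    ENNReal.ofReal
      (∑ ε : Fin d → Bool,
        if (∑ i, if ε i then a i else 0) ≤ b then
          (-1 : ℝ) ^ (Finset.univ.filter fun i => ε i = true).card *
              (b - ∑ i, if ε i then a i else 0) ^ d /
            (d.factorial * ∏ i, a i)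
        else 0) := by
  obtain ⟨n, rfl⟩ : ∃ n, d = n + 1 := ⟨d - 1, by omega⟩
  set S : Set (Fin (n+1) → ℝ) :=
    {x | (∀ i, x i ∈ Set.Icc (0:ℝ) 1) ∧ ∑ i, a i * x i ≤ b} with hSdef
  have hhalfm : MeasurableSet {x : Fin (n+1) → ℝ | ∑ i, a i * x i ≤ b} :=
    measurableSet_le (by fun_prop) measurable_const
  have hS : S = (Set.univ.pi fun _ : Fin (n+1) => Set.Icc (0:ℝ) 1) ∩
      {x | ∑ i, a i * x i ≤ b} := by
    ext x
    simp only [hSdef, Set.mem_setOf_eq, Set.mem_inter_iff, Set.mem_pi, Set.mem_univ,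
      true_implies]
  have hSm : MeasurableSet S := by
    rw [hS]
    exact (MeasurableSet.univ_pi fun _ => measurableSet_Icc).inter hhalfm
  have h1 : volume {x : EuclideanSpace ℝ (Fin (n+1)) |
      (∀ i, x i ∈ Set.Icc (0 : ℝ) 1) ∧ ∑ i, a i * x i ≤ b} = volume S := by
    have := (EuclideanSpace.volume_preserving_symm_measurableEquiv_toLp (Fin (n+1))).measure_preimage
      hSm.nullMeasurableSet
    rw [← this]
    rfl
  rw [h1]
  have h2 : volume S = (Measure.pi fun _ : Fin (n+1) => nu) {x | ∑ i, a i * x i ≤ b} := by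
    rw [hS, Set.inter_comm, volume_pi, ← Measure.restrict_apply hhalfm, pi_nu_eq]
  rw [h2]
  have h3 : (Measure.pi fun _ : Fin (n+1) => nu) {x | ∑ i, a i * x i ≤ b}
      = ENNReal.ofReal (∫ x, gg 0 (b - ∑ i, a i * x i)
          ∂(Measure.pi fun _ : Fin (n+1) => nu)) := by
    have hind : ∀ x : Fin (n+1) → ℝ, gg 0 (b - ∑ i, a i * x i)
        = Set.indicator {x : Fin (n+1) → ℝ | ∑ i, a i * x i ≤ b}
            (1 : (Fin (n+1) → ℝ) → ℝ) x := by
      intro x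
      unfold gg
      rw [Set.indicator_apply]
      simp only [Set.mem_setOf_eq, Pi.one_apply]
      by_cases h : ∑ i, a i * x i ≤ b
      · rw [if_pos (by linarith : (0:ℝ) ≤ b - ∑ i, a i * x i), if_pos h]
        simp
      · rw [if_neg (fun hc => h (by linarith)), if_neg h]
    rw [show (∫ x, gg 0 (b - ∑ i, a i * x i) ∂(Measure.pi fun _ : Fin (n+1) => nu)) = _
      from integral_congr_ae (Filter.Eventually.of_forall hind)]
    rw [MeasureTheory.integral_indicator_one hhalfm]
    rw [measureReal_def, ENNReal.ofReal_toReal (measure_ne_top _ _)]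
  rw [h3, main_integral n a ha b]
  congr 1
  refine Finset.sum_congr rfl fun ε _ => ?_
  have hsgn : (∏ i : Fin (n+1), if ε i then (-1:ℝ) else 1)
      = (-1 : ℝ) ^ (Finset.univ.filter fun i => ε i = true).card := by
    rw [Finset.prod_ite]
    simp [Finset.prod_const]
  rw [hsgn]
  by_cases h : (∑ i, if ε i then a i else 0) ≤ b
  · rw [if_pos h]
    unfold gg
    rw [if_pos (by linarith : (0:ℝ) ≤ b - ∑ i, if ε i then a i else 0)]
    ring
  · rw [if_neg h]
    unfold gg
    rw [if_neg (fun hc => h (by linarith))]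
    simp
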